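/- Nash-type inequality (Lemma 3.3 of the paper): Let μ be a probability measure on a measurable space, let Φ be a measurable function with 0 < Φ ≤ M almost everywhere for a constant M, and suppose ln∘Φ is μ-integrable. Then | ln(∫Φ dμ) − ∫ ln Φ dμ | · (∫ Φ dμ) ≤ M · ∫ | ln Φ − ∫ ln Φ dμ | dμ. -/

import Mathlib

open MeasureTheory Real

/-- **Nash-type inequality (Lemma 3.3).** For a probability measure `μ` and a measurable
function `Φ` with `0 < Φ ≤ M` a.e. such that `ln ∘ Φ` is integrable,
`|ln(∫Φ dμ) − ∫ ln Φ dμ| · (∫Φ dμ) ≤ M · ∫ |ln Φ − ∫ ln Φ dμ| dμ`. -/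
theorem nash_type_inequality {α : Type*} [MeasurableSpace α]
    (μ : Measure α) [IsProbabilityMeasure μ]
    (Φ : α → ℝ) (M : ℝ)
    (hmeas : Measurable Φ)
    (hpos : ∀ᵐ x ∂μ, 0 < Φ x)
    (hbdd : ∀ᵐ x ∂μ, Φ x ≤ M)
    (hlog_int : Integrable (fun x => Real.log (Φ x)) μ) :
    |Real.log (∫ x, Φ x ∂μ) - ∫ x, Real.log (Φ x) ∂μ| * (∫ x, Φ x ∂μ) ≤
      M * ∫ x, |Real.log (Φ x) - ∫ y, Real.log (Φ y) ∂μ| ∂μ := by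
  set L : ℝ := ∫ x, Real.log (Φ x) ∂μ with hLdef
  -- M > 0
  obtain ⟨x₀, hx₀pos, hx₀bdd⟩ := (hpos.and hbdd).exists
  have hM0 : 0 < M := lt_of_lt_of_le hx₀pos hx₀bdd
  -- Φ is integrable
  have hΦint : Integrable Φ μ := by
    refine (integrable_const M).mono' hmeas.aestronglyMeasurable ?_
    filter_upwards [hpos, hbdd] with x h1 h2
    rw [Real.norm_eq_abs, abs_of_pos h1]; exact h2
  set I : ℝ := ∫ x, Φ x ∂μ with hIdef
  -- I > 0
  have hI0 : 0 < I := by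
    rw [hIdef, integral_pos_iff_support_of_nonneg_ae
      (hpos.mono fun x hx => hx.le) hΦint]
    have h1 : μ (Function.support Φ)ᶜ = 0 := by
      apply measure_mono_null _ hpos
      intro x hx
      simp only [Function.mem_support, not_not, Set.mem_compl_iff] at hx ⊢
      simp [hx]
    have h2 : μ (Function.support Φ) = 1 := by
      have := prob_compl_eq_zero_iff (μ := μ) (s := Function.support Φ)
        (hmeas (measurableSet_singleton 0)).compl |>.mp h1
      exact this
    rw [h2]; norm_num
  -- log measurable
  have hlogmeas : Measurable fun x => Real.log (Φ x) := Real.measurable_log.comp hmeas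
  -- ψ := log Φ - L integrable
  have hψint : Integrable (fun x => Real.log (Φ x) - L) μ := hlog_int.sub (integrable_const L)
  -- Φ * ψ integrable
  have hΦψint : Integrable (fun x => Φ x * (Real.log (Φ x) - L)) μ := by
    refine (hψint.abs.const_mul M).mono'
      (hmeas.mul (hlogmeas.sub measurable_const)).aestronglyMeasurable ?_
    filter_upwards [hpos, hbdd] with x h1 h2
    rw [Real.norm_eq_abs, abs_mul, abs_of_pos h1]
    exact mul_le_mul_of_nonneg_right h2 (abs_nonneg _)
  -- Φ * log Φ integrable
  have hΦlogint : Integrable (fun x => Φ x * Real.log (Φ x)) μ := by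
    have h : (fun x => Φ x * Real.log (Φ x)) =
        fun x => Φ x * (Real.log (Φ x) - L) + Φ x * L := by ext x; ring
    rw [h]
    exact hΦψint.add (hΦint.mul_const L)
  -- Jensen: L ≤ log I
  have hjensen : L ≤ Real.log I := by
    have hpt : ∀ᵐ x ∂μ, Real.log (Φ x) ≤ Real.log I + (Φ x / I - 1) := by
      filter_upwards [hpos] with x hx
      have h := Real.log_le_sub_one_of_pos (show 0 < Φ x / I from div_pos hx hI0)
      rw [Real.log_div (ne_of_gt hx) (ne_of_gt hI0)] at h
      linarith
    have hg : Integrable (fun x => Φ x / I - 1) μ :=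
      (hΦint.div_const I).sub (integrable_const 1)
    have := integral_mono_ae hlog_int ((integrable_const (Real.log I)).add hg) hpt
    simp only [Pi.add_apply] at this
    rw [integral_add (integrable_const _) hg,
      integral_sub (hΦint.div_const I) (integrable_const 1),
      integral_div, integral_const, integral_const] at this
    simp only [measure_univ, probReal_univ, ENNReal.toReal_one, smul_eq_mul, one_mul] at this
    rw [← hIdef, div_self (ne_of_gt hI0)] at this
    rw [hLdef]; linarith
  -- key: log I * I ≤ ∫ Φ log Φ
  have hkey : Real.log I * I ≤ ∫ x, Φ x * Real.log (Φ x) ∂μ := by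
    have hpt : ∀ᵐ x ∂μ, Φ x * Real.log I - Φ x * Real.log (Φ x) ≤ I - Φ x := by
      filter_upwards [hpos] with x hx
      have h := Real.log_le_sub_one_of_pos (show 0 < I / Φ x from div_pos hI0 hx)
      rw [Real.log_div (ne_of_gt hI0) (ne_of_gt hx)] at h
      have h3 := mul_le_mul_of_nonneg_left h hx.le
      have h2 : Φ x * (I / Φ x - 1) = I - Φ x := by
        field_simp
      have h4 : Φ x * Real.log I - Φ x * Real.log (Φ x)
          = Φ x * (Real.log I - Real.log (Φ x)) := by ring
      linarith
    have := integral_mono_ae ((hΦint.mul_const (Real.log I)).sub hΦlogint)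
      ((integrable_const I).sub hΦint) hpt
    simp only [Pi.sub_apply] at this
    rw [integral_sub (hΦint.mul_const (Real.log I)) hΦlogint,
      integral_sub (integrable_const I) hΦint,
      integral_mul_const, integral_const] at this
    simp only [measure_univ, probReal_univ, ENNReal.toReal_one, smul_eq_mul, one_mul] at this
    rw [← hIdef] at this
    linarith
  -- bound: ∫ Φ ψ ≤ M ∫ |ψ|
  have hbound : ∫ x, Φ x * (Real.log (Φ x) - L) ∂μ ≤
      M * ∫ x, |Real.log (Φ x) - L| ∂μ := by
    rw [← integral_const_mul]
    refine integral_mono_ae hΦψint (hψint.abs.const_mul M) ?_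
    filter_upwards [hpos, hbdd] with x h1 h2
    calc Φ x * (Real.log (Φ x) - L) ≤ Φ x * |Real.log (Φ x) - L| :=
          mul_le_mul_of_nonneg_left (le_abs_self _) h1.le
      _ ≤ M * |Real.log (Φ x) - L| :=
          mul_le_mul_of_nonneg_right h2 (abs_nonneg _)
  -- combine
  rw [abs_of_nonneg (by linarith : (0:ℝ) ≤ Real.log I - L)]
  have hsplit : ∫ x, Φ x * (Real.log (Φ x) - L) ∂μ =
      (∫ x, Φ x * Real.log (Φ x) ∂μ) - L * I := by
    have : (fun x => Φ x * (Real.log (Φ x) - L)) =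
        fun x => Φ x * Real.log (Φ x) - Φ x * L := by ext x; ring
    rw [this, integral_sub hΦlogint (hΦint.mul_const L), integral_mul_const, ← hIdef]
    ring
  rw [hsplit] at hbound
  nlinarith
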